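/- Let t ≥ 1, let B₁ and N₁ be real symmetric positive definite t×t matrices and B₂ a real symmetric positive semidefinite t×t matrix. For a real t×t matrix C define M(C) = B₁ + C·B₂·Cᵀ − (B₁ + C·B₂)·(B₁ + B₂ + N₁)⁻¹·(B₁ + C·B₂)ᵀ. Then for every real t×t matrix C one has det(M(C)) ≥ det(B₁)·det(N₁)/det(B₁+N₁), and equality holds for C* = B₁·(B₁+N₁)⁻¹, for which M(C*) = B₁·(B₁+N₁)⁻¹·N₁. -/

import Mathlib

open Matrix

lemma aux_one_le_det_one_add {n : ℕ} {P : Matrix (Fin n) (Fin n) ℝ}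
    (hP : P.PosSemidef) : 1 ≤ (1 + P).det := by
  have hH := hP.isHermitian
  have hspec := hH.spectral_theorem
  rw [Unitary.conjStarAlgAut_apply] at hspec
  set U := (hH.eigenvectorUnitary : Matrix (Fin n) (Fin n) ℝ) with hUdef
  have hU : U * star U = 1 := mem_unitaryGroup_iff.mp hH.eigenvectorUnitary.2
  have h1P : 1 + P = U * (1 + diagonal (RCLike.ofReal ∘ hH.eigenvalues)) * star U := by
    rw [mul_add, add_mul, mul_one, hU, ← hspec]
  rw [h1P, det_mul_right_comm, hU, one_mul]
  have : (1 : Matrix (Fin n) (Fin n) ℝ) + diagonal (RCLike.ofReal ∘ hH.eigenvalues)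
      = diagonal (fun i => 1 + hH.eigenvalues i) := by
    rw [← diagonal_one, diagonal_add]
    congr 1
  rw [this, det_diagonal]
  calc (1:ℝ) = ∏ _i : Fin n, 1 := by simp
    _ ≤ ∏ i, (1 + hH.eigenvalues i) :=
        Finset.prod_le_prod (fun i _ => zero_le_one)
          (fun i _ => by linarith [hP.eigenvalues_nonneg i])

open scoped MatrixOrder in
lemma aux_det_le {n : ℕ} {A W : Matrix (Fin n) (Fin n) ℝ}
    (hA : A.PosDef) (hW : W.PosSemidef) : A.det ≤ (A + W).det := by
  set R := CFC.sqrt A with hRdef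
  have hRR : R * R = A := CFC.sqrt_mul_sqrt_self A hA.posSemidef.nonneg
  have hdetA : 0 < A.det := hA.det_pos
  have hdR : R.det ≠ 0 := by
    intro h
    rw [← hRR, det_mul, h, mul_zero] at hdetA
    exact lt_irrefl _ hdetA
  have hRu : IsUnit R.det := isUnit_iff_ne_zero.mpr hdR
  have hRi : R * R⁻¹ = 1 := mul_nonsing_inv _ hRu
  have hRi' : R⁻¹ * R = 1 := nonsing_inv_mul _ hRu
  have hRH : Rᴴ = R := (CFC.sqrt_nonneg A).posSemidef.isHermitian
  have hRiH : R⁻¹ᴴ = R⁻¹ := by rw [conjTranspose_nonsing_inv, hRH]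
  have hP : (R⁻¹ * W * R⁻¹).PosSemidef := by
    have := hW.mul_mul_conjTranspose_same R⁻¹
    rwa [hRiH] at this
  have key : A + W = R * (1 + R⁻¹ * W * R⁻¹) * R := by
    have h2 : R * (R⁻¹ * W * R⁻¹) * R = (R * R⁻¹) * W * (R⁻¹ * R) := by noncomm_ring
    rw [mul_add, add_mul, mul_one, hRR, h2, hRi, hRi', one_mul, mul_one]
  have h1 : 1 ≤ (1 + R⁻¹ * W * R⁻¹).det := aux_one_le_det_one_add hP
  have hsq : R.det * R.det = A.det := by rw [← det_mul, hRR]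
  rw [key, det_mul, det_mul]
  nlinarith [sq_nonneg R.det]

/-- Determinant form of the dirty-paper precoding lemma: the conditional covariance
`M(C) = B₁ + C B₂ Cᵀ - (B₁ + C B₂)(B₁+B₂+N₁)⁻¹(B₁ + C B₂)ᵀ` satisfies
`det(M(C)) ≥ det B₁ det N₁ / det(B₁+N₁)` for every `C`, with equality for
`C* = B₁ (B₁+N₁)⁻¹`, for which `M(C*) = B₁ (B₁+N₁)⁻¹ N₁`. -/
theorem stmt_14 (t : ℕ) (ht : 1 ≤ t)
    (B₁ N₁ : Matrix (Fin t) (Fin t) ℝ) (hB₁ : B₁.PosDef) (hN₁ : N₁.PosDef)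
    (B₂ : Matrix (Fin t) (Fin t) ℝ) (hB₂ : B₂.PosSemidef)
    (M : Matrix (Fin t) (Fin t) ℝ → Matrix (Fin t) (Fin t) ℝ)
    (hM : ∀ C, M C = B₁ + C * B₂ * Cᵀ
        - (B₁ + C * B₂) * (B₁ + B₂ + N₁)⁻¹ * (B₁ + C * B₂)ᵀ) :
    (∀ C : Matrix (Fin t) (Fin t) ℝ,
        B₁.det * N₁.det / (B₁ + N₁).det ≤ (M C).det) ∧
      M (B₁ * (B₁ + N₁)⁻¹) = B₁ * (B₁ + N₁)⁻¹ * N₁ ∧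
      (M (B₁ * (B₁ + N₁)⁻¹)).det = B₁.det * N₁.det / (B₁ + N₁).det := by
  have hS : (B₁ + B₂ + N₁).PosDef := (hB₁.add_posSemidef hB₂).add hN₁
  have hD : (B₁ + N₁).PosDef := hB₁.add hN₁
  set S := B₁ + B₂ + N₁ with hSdef
  set D := B₁ + N₁ with hDdef
  set T := S⁻¹ with hTdef
  set P := D⁻¹ with hPdef
  have hSu : IsUnit S.det := isUnit_iff_ne_zero.mpr hS.det_pos.ne'
  have hDu : IsUnit D.det := isUnit_iff_ne_zero.mpr hD.det_pos.ne'
  have hST : S * T = 1 := mul_nonsing_inv _ hSu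
  have hTS : T * S = 1 := nonsing_inv_mul _ hSu
  have hDP : D * P = 1 := mul_nonsing_inv _ hDu
  have hPD : P * D = 1 := nonsing_inv_mul _ hDu
  -- transpose facts
  have hB₁t : B₁ᵀ = B₁ := by
    rw [← conjTranspose_eq_transpose_of_trivial]; exact hB₁.isHermitian
  have hB₂t : B₂ᵀ = B₂ := by
    rw [← conjTranspose_eq_transpose_of_trivial]; exact hB₂.isHermitian
  have hN₁t : N₁ᵀ = N₁ := by
    rw [← conjTranspose_eq_transpose_of_trivial]; exact hN₁.isHermitian
  have hSt : Sᵀ = S := by rw [hSdef, transpose_add, transpose_add, hB₁t, hB₂t, hN₁t]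
  have hDt : Dᵀ = D := by rw [hDdef, transpose_add, hB₁t, hN₁t]
  have hTt : Tᵀ = T := by rw [hTdef, transpose_nonsing_inv, hSt]
  have hPt : Pᵀ = P := by rw [hPdef, transpose_nonsing_inv, hDt]
  set Q := B₂ - B₂ * T * B₂ with hQdef
  have hSD : S = D + B₂ := by rw [hSdef, hDdef]; abel
  -- key identities
  have hQ1 : Q = D * T * B₂ := by
    have h : D * T * B₂ = (S - B₂) * T * B₂ := by
      congr 1; congr 1; rw [hSD]; abel
    rw [hQdef, h]
    have : (S - B₂) * T * B₂ = S * T * B₂ - B₂ * T * B₂ := by noncomm_ring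
    rw [this, hST, one_mul]
  have hkey : B₁ * P * Q = B₁ * T * B₂ := by
    rw [hQ1]
    calc B₁ * P * (D * T * B₂) = B₁ * (P * D) * (T * B₂) := by noncomm_ring
      _ = B₁ * T * B₂ := by rw [hPD, mul_one]; noncomm_ring
  have hQt : Qᵀ = Q := by
    rw [hQdef, transpose_sub, transpose_mul, transpose_mul, hB₂t, hTt, Matrix.mul_assoc]
  have hkey2 : Q * (P * B₁) = B₂ * T * B₁ := by
    have h := congrArg transpose hkey
    rw [transpose_mul, transpose_mul, transpose_mul, transpose_mul, hQt, hPt, hTt,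
      hB₁t, hB₂t] at h
    rw [h, Matrix.mul_assoc]
  have hconst : B₁ - B₁ * T * B₁ = B₁ * P * N₁ + B₁ * T * B₂ * (P * B₁) := by
    have e1 : B₁ * P * N₁ = B₁ - B₁ * P * B₁ := by
      have hN : N₁ = D - B₁ := by rw [hDdef]; abel
      calc B₁ * P * N₁ = B₁ * (P * D) - B₁ * P * B₁ := by rw [hN]; noncomm_ring
        _ = B₁ - B₁ * P * B₁ := by rw [hPD, mul_one]
    have e2 : B₁ * P * B₁ = B₁ * T * B₁ + B₁ * T * B₂ * (P * B₁) := by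
      calc B₁ * P * B₁ = B₁ * (T * S) * (P * B₁) := by rw [hTS]; noncomm_ring
        _ = B₁ * T * (D * (P * B₁)) + B₁ * T * B₂ * (P * B₁) := by
            rw [hSD]; noncomm_ring
        _ = B₁ * T * B₁ + B₁ * T * B₂ * (P * B₁) := by
            rw [show D * (P * B₁) = (D * P) * B₁ by noncomm_ring, hDP, one_mul]
    rw [e1, e2]; abel
  -- main identity
  have hid : ∀ C, M C = B₁ * P * N₁ + (C - B₁ * P) * Q * (C - B₁ * P)ᵀ := by
    intro C
    have ht1 : (B₁ + C * B₂)ᵀ = B₁ + B₂ * Cᵀ := by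
      rw [transpose_add, transpose_mul, hB₁t, hB₂t]
    have ht2 : (C - B₁ * P)ᵀ = Cᵀ - P * B₁ := by
      rw [transpose_sub, transpose_mul, hB₁t, hPt]
    rw [hM C, ht1, ht2]
    calc B₁ + C * B₂ * Cᵀ - (B₁ + C * B₂) * T * (B₁ + B₂ * Cᵀ)
        = (B₁ - B₁ * T * B₁) - B₁ * T * B₂ * Cᵀ - C * (B₂ * T * B₁)
            + C * Q * Cᵀ := by rw [hQdef]; noncomm_ring
      _ = (B₁ * P * N₁ + B₁ * T * B₂ * (P * B₁)) - B₁ * T * B₂ * Cᵀ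
            - C * (B₂ * T * B₁) + C * Q * Cᵀ := by rw [hconst]
      _ = B₁ * P * N₁ + ((B₁ * P * Q) * (P * B₁) - (B₁ * P * Q) * Cᵀ
            - C * (Q * (P * B₁)) + C * Q * Cᵀ) := by rw [hkey, hkey2]; abel
      _ = B₁ * P * N₁ + (C - B₁ * P) * Q * (Cᵀ - P * B₁) := by noncomm_ring
  -- Q is PSD
  have hQpsd : Q.PosSemidef := by
    refine PosSemidef.of_dotProduct_mulVec_nonneg ?_ ?_
    · show Qᴴ = Q
      rw [conjTranspose_eq_transpose_of_trivial, hQt]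
    · intro x
      set z := T *ᵥ (B₂ *ᵥ x) with hzdef
      have hz : S *ᵥ z = B₂ *ᵥ x := by
        rw [hzdef, mulVec_mulVec, hST, one_mulVec]
      have hDz : D *ᵥ z = B₂ *ᵥ x - B₂ *ᵥ z := by
        have hDS : D = S - B₂ := by rw [hSD]; abel
        rw [hDS, sub_mulVec, hz]
      have hQx : Q *ᵥ x = B₂ *ᵥ x - B₂ *ᵥ z := by
        rw [hQdef, sub_mulVec]
        congr 1
        rw [hzdef, mulVec_mulVec, mulVec_mulVec]
      have key : x ⬝ᵥ (Q *ᵥ x)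
          = (x - z) ⬝ᵥ (B₂ *ᵥ (x - z)) + z ⬝ᵥ (D *ᵥ z) := by
        rw [hQx, hDz, mulVec_sub]
        simp only [dotProduct_sub, sub_dotProduct]
        ring
      have h1 := hB₂.dotProduct_mulVec_nonneg (x - z)
      have h2 := hD.posSemidef.dotProduct_mulVec_nonneg z
      rw [star_trivial] at h1 h2 ⊢
      rw [key]
      exact add_nonneg h1 h2
  -- B₁ * P * N₁ is PosDef with the right determinant
  have hinvsum : B₁⁻¹ + N₁⁻¹ = N₁⁻¹ * D * B₁⁻¹ := by
    have hB : B₁ * B₁⁻¹ = 1 := mul_nonsing_inv _ (isUnit_iff_ne_zero.mpr hB₁.det_pos.ne')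
    have hN : N₁⁻¹ * N₁ = 1 := nonsing_inv_mul _ (isUnit_iff_ne_zero.mpr hN₁.det_pos.ne')
    rw [hDdef]
    calc B₁⁻¹ + N₁⁻¹ = N₁⁻¹ * (N₁ * B₁⁻¹) + N₁⁻¹ * (B₁ * B₁⁻¹) := by
          rw [hB, mul_one, show N₁⁻¹ * (N₁ * B₁⁻¹) = (N₁⁻¹ * N₁) * B₁⁻¹ by noncomm_ring,
            hN, one_mul]
      _ = N₁⁻¹ * (B₁ + N₁) * B₁⁻¹ := by noncomm_ring
  have hMstar : B₁ * P * N₁ = (B₁⁻¹ + N₁⁻¹)⁻¹ := by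
    rw [hinvsum, Matrix.mul_inv_rev, Matrix.mul_inv_rev,
      nonsing_inv_nonsing_inv _ (isUnit_iff_ne_zero.mpr hB₁.det_pos.ne'),
      nonsing_inv_nonsing_inv _ (isUnit_iff_ne_zero.mpr hN₁.det_pos.ne'), hPdef]
    noncomm_ring
  have hMstarPD : (B₁ * P * N₁).PosDef := by
    rw [hMstar]
    exact (hB₁.inv.add hN₁.inv).inv
  have hdetMstar : (B₁ * P * N₁).det = B₁.det * N₁.det / D.det := by
    rw [det_mul, det_mul, hPdef, det_nonsing_inv, Ring.inverse_eq_inv']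
    field_simp
  refine ⟨?_, ?_, ?_⟩
  · intro C
    have hW : ((C - B₁ * P) * Q * (C - B₁ * P)ᵀ).PosSemidef := by
      have h := hQpsd.mul_mul_conjTranspose_same (C - B₁ * P)
      rwa [conjTranspose_eq_transpose_of_trivial] at h
    have := aux_det_le hMstarPD hW
    rw [← hid C] at this
    rw [← hdetMstar]
    exact this
  · rw [hid (B₁ * P), sub_self, zero_mul, zero_mul, add_zero]
  · rw [hid (B₁ * P), sub_self, zero_mul, zero_mul, add_zero, hdetMstar]
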